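/- In the Euclidean bilevel setting with the Lipschitz-and-boundedness assumptions, the hypergradient map x ↦ ∇F(x) = ∇ₓ f(x, y*(x)) − ∇²_{xy} g(x, y*(x))[(∇²_{yy} g(x, y*(x)))⁻¹ ∇_y f(x, y*(x))] is Lipschitz with constant L_F := (L/μ + 1)(L + ρM/μ + ρLM/μ² + L²/μ): for all x₁, x₂ ∈ H₁, ‖∇F(x₁) − ∇F(x₂)‖ ≤ L_F ‖x₁ − x₂‖. -/

import Mathlib

open scoped RealInnerProductSpace

variable {H₁ : Type*} [NormedAddCommGroup H₁] [InnerProductSpace ℝ H₁] [FiniteDimensional ℝ H₁]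
variable {H₂ : Type*} [NormedAddCommGroup H₂] [InnerProductSpace ℝ H₂] [FiniteDimensional ℝ H₂]

/-- Partial gradient of a bifunction in the first variable: `∇ₓ f (x, y)`. -/
noncomputable def gradx (f : H₁ → H₂ → ℝ) (x : H₁) (y : H₂) : H₁ :=
  gradient (fun x' => f x' y) x

/-- Partial gradient of a bifunction in the second variable: `∇_y f (x, y)`. -/
noncomputable def grady (f : H₁ → H₂ → ℝ) (x : H₁) (y : H₂) : H₂ :=
  gradient (fun y' => f x y') y

/-- Partial Hessian `∇²_{yy} g(x,y)`, a continuous linear operator on `H₂`. -/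
noncomputable def hessyy (g : H₁ → H₂ → ℝ) (x : H₁) (y : H₂) : H₂ →L[ℝ] H₂ :=
  fderiv ℝ (fun y' => grady g x y') y

/-- Cross derivative `∇²_{yx} g(x,y) : H₁ → H₂`, the derivative in `x` of `∇_y g`. -/
noncomputable def hessyx (g : H₁ → H₂ → ℝ) (x : H₁) (y : H₂) : H₁ →L[ℝ] H₂ :=
  fderiv ℝ (fun x' => grady g x' y) x

/-- Cross derivative `∇²_{xy} g(x,y) : H₂ → H₁`, the adjoint of `∇²_{yx} g(x,y)`. -/
noncomputable def hessxy (g : H₁ → H₂ → ℝ) (x : H₁) (y : H₂) : H₂ →L[ℝ] H₁ :=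
  ContinuousLinearMap.adjoint (hessyx g x y)

set_option linter.unusedSectionVars false

theorem grady_eq' (g : H₁ → H₂ → ℝ) (hg : ContDiff ℝ 2 fun p : H₁ × H₂ => g p.1 p.2)
    (x : H₁) (y : H₂) :
    grady g x y = (InnerProductSpace.toDual ℝ H₂).symm
      ((fderiv ℝ (fun p : H₁ × H₂ => g p.1 p.2) (x, y)).comp
        (ContinuousLinearMap.inr ℝ H₁ H₂)) := by
  have hd : HasFDerivAt (fun y' => g x y')
      ((fderiv ℝ (fun p : H₁ × H₂ => g p.1 p.2) (x, y)).comp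
        (ContinuousLinearMap.inr ℝ H₁ H₂)) y := by
    have h1 := (hg.differentiable (by norm_num) (x, y)).hasFDerivAt
    exact h1.comp y (hasFDerivAt_prodMk_right x y)
  rw [grady, gradient, hd.fderiv]

theorem grady_contDiff' (g : H₁ → H₂ → ℝ)
    (hg : ContDiff ℝ 2 fun p : H₁ × H₂ => g p.1 p.2) :
    ContDiff ℝ 1 (fun p : H₁ × H₂ => grady g p.1 p.2) := by
  have hD : ContDiff ℝ 1 (fderiv ℝ (fun p : H₁ × H₂ => g p.1 p.2)) :=
    hg.fderiv_right (by norm_num)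
  have heq : (fun p : H₁ × H₂ => grady g p.1 p.2) = fun p : H₁ × H₂ =>
      (InnerProductSpace.toDual ℝ H₂).symm
        ((fderiv ℝ (fun p : H₁ × H₂ => g p.1 p.2) p).comp
          (ContinuousLinearMap.inr ℝ H₁ H₂)) :=
    funext fun p => grady_eq' g hg p.1 p.2
  rw [heq]
  exact (InnerProductSpace.toDual ℝ H₂).symm.contDiff.comp (hD.clm_comp contDiff_const)

theorem grady_diff_y' (g : H₁ → H₂ → ℝ)
    (hg : ContDiff ℝ 2 fun p : H₁ × H₂ => g p.1 p.2) (x : H₁) :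
    Differentiable ℝ (fun y' => grady g x y') :=
  (((grady_contDiff' g hg).differentiable one_ne_zero).comp
    ((differentiable_const x).prodMk differentiable_id) :)

theorem strong_mono' (g : H₁ → H₂ → ℝ) (μ : ℝ)
    (hg : ContDiff ℝ 2 fun p : H₁ × H₂ => g p.1 p.2)
    (hpos : ∀ (x : H₁) (y v : H₂), μ * ‖v‖ ^ 2 ≤ ⟪hessyy g x y v, v⟫)
    (x : H₁) (y₁ y₂ : H₂) :
    μ * ‖y₁ - y₂‖ ^ 2 ≤ ⟪grady g x y₁ - grady g x y₂, y₁ - y₂⟫ := by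
  have hdiff := grady_diff_y' g hg x
  set d := y₁ - y₂ with hd
  set h : ℝ → ℝ := fun t => ⟪d, grady g x (y₂ + t • d)⟫ - t * (μ * ‖d‖ ^ 2) with hh
  have hderiv : ∀ t : ℝ, HasDerivAt h (⟪d, hessyy g x (y₂ + t • d) d⟫ - μ * ‖d‖ ^ 2) t := by
    intro t
    have h1 : HasDerivAt (fun t : ℝ => y₂ + t • d) d t := by
      simpa using ((hasDerivAt_id t).smul_const d).const_add y₂
    have h2 : HasFDerivAt (fun y' => grady g x y') (hessyy g x (y₂ + t • d)) (y₂ + t • d) :=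
      (hdiff _).hasFDerivAt
    have h3 : HasDerivAt (fun t : ℝ => grady g x (y₂ + t • d)) (hessyy g x (y₂ + t • d) d) t :=
      h2.comp_hasDerivAt t h1
    have h4 : HasDerivAt (fun t : ℝ => (innerSL ℝ d) (grady g x (y₂ + t • d)))
        ((innerSL ℝ d) (hessyy g x (y₂ + t • d) d)) t :=
      (innerSL ℝ d).hasFDerivAt.comp_hasDerivAt t h3
    have h5 : HasDerivAt (fun t : ℝ => t * (μ * ‖d‖ ^ 2)) (μ * ‖d‖ ^ 2) t :=
      hasDerivAt_mul_const _
    have h6 := h4.sub h5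
    simp only [innerSL_apply_apply] at h6
    exact h6
  have hmono : Monotone h := by
    refine monotone_of_deriv_nonneg (fun t => (hderiv t).differentiableAt) (fun t => ?_)
    rw [(hderiv t).deriv]
    have := hpos x (y₂ + t • d) d
    rw [real_inner_comm] at this
    linarith
  have h01 := hmono (show (0 : ℝ) ≤ 1 by norm_num)
  have e0 : h 0 = ⟪d, grady g x y₂⟫ := by simp [hh]
  have e1 : h 1 = ⟪d, grady g x y₁⟫ - μ * ‖d‖ ^ 2 := by
    have : y₂ + (1 : ℝ) • d = y₁ := by rw [hd]; simp
    rw [hh]; simp only [this, one_mul]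
  rw [e0, e1] at h01
  have e2 : ⟪grady g x y₁ - grady g x y₂, d⟫ = ⟪d, grady g x y₁⟫ - ⟪d, grady g x y₂⟫ := by
    rw [inner_sub_left, real_inner_comm (grady g x y₁) d, real_inner_comm (grady g x y₂) d]
  rw [e2]
  linarith

/-- In the Euclidean bilevel setting with the Lipschitz-and-boundedness
assumptions, the hypergradient map
`x ↦ ∇F(x) = ∇ₓ f(x, y*(x)) − ∇²_{xy} g(x, y*(x))[(∇²_{yy} g(x, y*(x)))⁻¹ ∇_y f(x, y*(x))]`
is Lipschitz with constant `L_F := (L/μ + 1)(L + ρM/μ + ρLM/μ² + L²/μ)`. -/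
theorem statement4
    (f g : H₁ → H₂ → ℝ) (μ L ρ M : ℝ)
    (hμ : 0 < μ) (hL : 0 ≤ L) (hρ : 0 ≤ ρ) (hM : 0 ≤ M)
    (hf : ContDiff ℝ 2 fun p : H₁ × H₂ => f p.1 p.2)
    (hg : ContDiff ℝ 2 fun p : H₁ × H₂ => g p.1 p.2)
    -- bounded gradients of `f`
    (hfxbd : ∀ (x : H₁) (y : H₂), ‖gradx f x y‖ ≤ M)
    (hfybd : ∀ (x : H₁) (y : H₂), ‖grady f x y‖ ≤ M)
    -- `∇ₓ f` and `∇_y f` are `L`-Lipschitz in each variable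
    (hfxLx : ∀ (y : H₂) (x₁ x₂ : H₁), ‖gradx f x₁ y - gradx f x₂ y‖ ≤ L * ‖x₁ - x₂‖)
    (hfxLy : ∀ (x : H₁) (y₁ y₂ : H₂), ‖gradx f x y₁ - gradx f x y₂‖ ≤ L * ‖y₁ - y₂‖)
    (hfyLx : ∀ (y : H₂) (x₁ x₂ : H₁), ‖grady f x₁ y - grady f x₂ y‖ ≤ L * ‖x₁ - x₂‖)
    (hfyLy : ∀ (x : H₁) (y₁ y₂ : H₂), ‖grady f x y₁ - grady f x y₂‖ ≤ L * ‖y₁ - y₂‖)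
    -- `∇ₓ g` and `∇_y g` are `L`-Lipschitz in each variable
    (hgxLx : ∀ (y : H₂) (x₁ x₂ : H₁), ‖gradx g x₁ y - gradx g x₂ y‖ ≤ L * ‖x₁ - x₂‖)
    (hgxLy : ∀ (x : H₁) (y₁ y₂ : H₂), ‖gradx g x y₁ - gradx g x y₂‖ ≤ L * ‖y₁ - y₂‖)
    (hgyLx : ∀ (y : H₂) (x₁ x₂ : H₁), ‖grady g x₁ y - grady g x₂ y‖ ≤ L * ‖x₁ - x₂‖)
    (hgyLy : ∀ (x : H₁) (y₁ y₂ : H₂), ‖grady g x y₁ - grady g x y₂‖ ≤ L * ‖y₁ - y₂‖)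
    -- `∇²_{yy} g` and `∇²_{xy} g` are `ρ`-Lipschitz in operator norm in each variable
    (hyyLx : ∀ (y : H₂) (x₁ x₂ : H₁), ‖hessyy g x₁ y - hessyy g x₂ y‖ ≤ ρ * ‖x₁ - x₂‖)
    (hyyLy : ∀ (x : H₁) (y₁ y₂ : H₂), ‖hessyy g x y₁ - hessyy g x y₂‖ ≤ ρ * ‖y₁ - y₂‖)
    (hxyLx : ∀ (y : H₂) (x₁ x₂ : H₁), ‖hessxy g x₁ y - hessxy g x₂ y‖ ≤ ρ * ‖x₁ - x₂‖)
    (hxyLy : ∀ (x : H₁) (y₁ y₂ : H₂), ‖hessxy g x y₁ - hessxy g x y₂‖ ≤ ρ * ‖y₁ - y₂‖)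
    -- `∇²_{yy} g(x,y) ⪰ μ · id` for all `(x,y)`
    (hpos : ∀ (x : H₁) (y v : H₂), μ * ‖v‖ ^ 2 ≤ ⟪hessyy g x y v, v⟫)
    -- `y*(x)` is the (unique) minimizer of `g(x, ·)`, characterized by `∇_y g(x, y*(x)) = 0`
    (ystar : H₁ → H₂)
    (hmin : ∀ (x : H₁) (z : H₂), g x (ystar x) ≤ g x z)
    (hstat : ∀ x : H₁, grady g x (ystar x) = 0)
    -- `Hinv x` is the inverse of `∇²_{yy} g(x, y*(x))`
    (Hinv : H₁ → H₂ →L[ℝ] H₂)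
    (hHinv1 : ∀ x : H₁, (Hinv x).comp (hessyy g x (ystar x)) = ContinuousLinearMap.id ℝ H₂)
    (hHinv2 : ∀ x : H₁, (hessyy g x (ystar x)).comp (Hinv x) = ContinuousLinearMap.id ℝ H₂)
    -- the hypergradient map
    (GF : H₁ → H₁)
    (hGF : ∀ x : H₁,
      GF x = gradx f x (ystar x) - hessxy g x (ystar x) (Hinv x (grady f x (ystar x)))) :
    ∀ x₁ x₂ : H₁,
      ‖GF x₁ - GF x₂‖ ≤
        (L / μ + 1) * (L + ρ * M / μ + ρ * L * M / μ ^ 2 + L ^ 2 / μ) * ‖x₁ - x₂‖ := by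
  
  -- preliminary facts
  have hHinvApply : ∀ (x : H₁) (w : H₂), hessyy g x (ystar x) (Hinv x w) = w := by
    intro x w
    have := DFunLike.congr_fun (hHinv2 x) w
    simpa using this
  have hHinvApply' : ∀ (x : H₁) (w : H₂), Hinv x (hessyy g x (ystar x) w) = w := by
    intro x w
    have := DFunLike.congr_fun (hHinv1 x) w
    simpa using this
  have hHinvBound : ∀ (x : H₁) (w : H₂), ‖Hinv x w‖ ≤ ‖w‖ / μ := by
    intro x w
    set v := Hinv x w with hv
    have h1 : μ * ‖v‖ ^ 2 ≤ ⟪hessyy g x (ystar x) v, v⟫ := hpos _ _ _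
    rw [hv, hHinvApply] at h1
    have h2 : ⟪w, Hinv x w⟫ ≤ ‖w‖ * ‖v‖ := real_inner_le_norm w v
    rw [le_div_iff₀ hμ]
    rcases eq_or_lt_of_le (norm_nonneg v) with h0 | h0
    · rw [← h0]; simpa using norm_nonneg w
    · nlinarith
  have hAle : ∀ (x : H₁) (y : H₂), ‖hessxy g x y‖ ≤ L := by
    intro x y
    have h1 : LipschitzWith L.toNNReal (fun x' => grady g x' y) :=
      LipschitzWith.of_dist_le_mul (fun a b => by
        simpa [dist_eq_norm, Real.coe_toNNReal L hL] using hgyLx y a b)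
    have h2 : ‖hessyx g x y‖ ≤ L := by
      simpa [hessyx, Real.coe_toNNReal L hL] using
        norm_fderiv_le_of_lipschitz ℝ h1
    calc ‖hessxy g x y‖ = ‖hessyx g x y‖ := ContinuousLinearMap.adjoint.norm_map _
      _ ≤ L := h2
  intro x₁ x₂
  set y₁ := ystar x₁ with hy₁
  set y₂ := ystar x₂ with hy₂
  set δ := ‖x₁ - x₂‖ with hδ
  have hδ0 : 0 ≤ δ := norm_nonneg _
  set η := ‖y₁ - y₂‖ with hη'
  have hη0 : 0 ≤ η := norm_nonneg _
  -- Lipschitzness of y*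
  have hη : η ≤ L / μ * δ := by
    rcases eq_or_lt_of_le hη0 with h0 | h0
    · rw [← h0]; positivity
    · have hsm := strong_mono' g μ hg hpos x₂ y₁ y₂
      have hz2 : grady g x₂ y₂ = 0 := hstat x₂
      have hz1 : grady g x₁ y₁ = 0 := hstat x₁
      have e : grady g x₂ y₁ - grady g x₂ y₂ = grady g x₂ y₁ - grady g x₁ y₁ := by
        rw [hz1, hz2]
      rw [e] at hsm
      have h2 : ⟪grady g x₂ y₁ - grady g x₁ y₁, y₁ - y₂⟫ ≤
          ‖grady g x₂ y₁ - grady g x₁ y₁‖ * η := real_inner_le_norm _ _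
      have h3 : ‖grady g x₂ y₁ - grady g x₁ y₁‖ ≤ L * δ := by
        have := hgyLx y₁ x₂ x₁
        rwa [norm_sub_rev x₂ x₁] at this
      rw [div_mul_eq_mul_div, le_div_iff₀ hμ]
      nlinarith
  set v₁ := grady f x₁ y₁ with hv₁
  set v₂ := grady f x₂ y₂ with hv₂
  set A₁ := hessxy g x₁ y₁ with hA₁
  set A₂ := hessxy g x₂ y₂ with hA₂
  -- bound on first difference
  have ha : ‖gradx f x₁ y₁ - gradx f x₂ y₂‖ ≤ L * (δ + η) := by
    calc ‖gradx f x₁ y₁ - gradx f x₂ y₂‖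
        ≤ ‖gradx f x₁ y₁ - gradx f x₂ y₁‖ + ‖gradx f x₂ y₁ - gradx f x₂ y₂‖ := by
          rw [← sub_add_sub_cancel (gradx f x₁ y₁) (gradx f x₂ y₁) (gradx f x₂ y₂)]
          exact norm_add_le _ _
      _ ≤ L * δ + L * η := add_le_add (hfxLx y₁ x₁ x₂) (hfxLy x₂ y₁ y₂)
      _ = L * (δ + η) := by ring
  have hv : ‖v₁ - v₂‖ ≤ L * (δ + η) := by
    calc ‖v₁ - v₂‖ ≤ ‖v₁ - grady f x₂ y₁‖ + ‖grady f x₂ y₁ - v₂‖ := by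
          rw [← sub_add_sub_cancel v₁ (grady f x₂ y₁) v₂]
          exact norm_add_le _ _
      _ ≤ L * δ + L * η := add_le_add (hfyLx y₁ x₁ x₂) (hfyLy x₂ y₁ y₂)
      _ = L * (δ + η) := by ring
  have hAd : ‖A₁ - A₂‖ ≤ ρ * (δ + η) := by
    calc ‖A₁ - A₂‖ ≤ ‖A₁ - hessxy g x₂ y₁‖ + ‖hessxy g x₂ y₁ - A₂‖ := by
          rw [← sub_add_sub_cancel A₁ (hessxy g x₂ y₁) A₂]
          exact norm_add_le _ _
      _ ≤ ρ * δ + ρ * η := add_le_add (hxyLx y₁ x₁ x₂) (hxyLy x₂ y₁ y₂)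
      _ = ρ * (δ + η) := by ring
  have hHd : ‖hessyy g x₂ y₂ - hessyy g x₁ y₁‖ ≤ ρ * (δ + η) := by
    calc ‖hessyy g x₂ y₂ - hessyy g x₁ y₁‖
        ≤ ‖hessyy g x₂ y₂ - hessyy g x₁ y₂‖ + ‖hessyy g x₁ y₂ - hessyy g x₁ y₁‖ := by
          rw [← sub_add_sub_cancel (hessyy g x₂ y₂) (hessyy g x₁ y₂) (hessyy g x₁ y₁)]
          exact norm_add_le _ _
      _ ≤ ρ * δ + ρ * η := by
          refine add_le_add ?_ ?_
          · have := hyyLx y₂ x₂ x₁; rwa [norm_sub_rev x₂ x₁] at this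
          · have := hyyLy x₁ y₂ y₁; rwa [norm_sub_rev y₂ y₁] at this
      _ = ρ * (δ + η) := by ring
  -- decomposition of the second difference
  have hb_eq : A₁ (Hinv x₁ v₁) - A₂ (Hinv x₂ v₂) =
      (A₁ - A₂) (Hinv x₁ v₁) + A₂ ((Hinv x₁ - Hinv x₂) v₁) + A₂ (Hinv x₂ (v₁ - v₂)) := by
    simp only [ContinuousLinearMap.sub_apply, map_sub]
    abel
  have hHinvdiff : (Hinv x₁ - Hinv x₂) v₁ =
      Hinv x₁ ((hessyy g x₂ y₂ - hessyy g x₁ y₁) (Hinv x₂ v₁)) := by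
    have e1 : hessyy g x₂ y₂ (Hinv x₂ v₁) = v₁ := hHinvApply x₂ v₁
    have e2 : Hinv x₁ (hessyy g x₁ y₁ (Hinv x₂ v₁)) = Hinv x₂ v₁ := hHinvApply' x₁ _
    simp only [ContinuousLinearMap.sub_apply, map_sub, e1, e2]
  -- bounds on the three pieces
  have hv₁M : ‖v₁‖ ≤ M := hfybd x₁ y₁
  have hu1 : ‖Hinv x₁ v₁‖ ≤ M / μ :=
    (hHinvBound x₁ v₁).trans (div_le_div_of_nonneg_right hv₁M hμ.le)
  have hu2 : ‖Hinv x₂ v₁‖ ≤ M / μ :=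
    (hHinvBound x₂ v₁).trans (div_le_div_of_nonneg_right hv₁M hμ.le)
  have hApt : ∀ (x : H₁) (y : H₂) (u : H₂), ‖hessxy g x y u‖ ≤ L * ‖u‖ := fun x y u =>
    ((hessxy g x y).le_opNorm u).trans (mul_le_mul_of_nonneg_right (hAle x y) (norm_nonneg u))
  have hb1 : ‖(A₁ - A₂) (Hinv x₁ v₁)‖ ≤ ρ * (δ + η) * (M / μ) := by
    calc ‖(A₁ - A₂) (Hinv x₁ v₁)‖ ≤ ‖A₁ - A₂‖ * ‖Hinv x₁ v₁‖ :=
          (A₁ - A₂).le_opNorm _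
      _ ≤ ρ * (δ + η) * (M / μ) := by
          apply mul_le_mul hAd hu1 (norm_nonneg _)
          positivity
  have hb2 : ‖A₂ ((Hinv x₁ - Hinv x₂) v₁)‖ ≤ L * ((ρ * (δ + η) * (M / μ)) / μ) := by
    have hinner : ‖(hessyy g x₂ y₂ - hessyy g x₁ y₁) (Hinv x₂ v₁)‖ ≤ ρ * (δ + η) * (M / μ) := by
      calc ‖(hessyy g x₂ y₂ - hessyy g x₁ y₁) (Hinv x₂ v₁)‖
          ≤ ‖hessyy g x₂ y₂ - hessyy g x₁ y₁‖ * ‖Hinv x₂ v₁‖ :=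
            (hessyy g x₂ y₂ - hessyy g x₁ y₁).le_opNorm _
        _ ≤ ρ * (δ + η) * (M / μ) := by
            apply mul_le_mul hHd hu2 (norm_nonneg _)
            positivity
    have hmid : ‖(Hinv x₁ - Hinv x₂) v₁‖ ≤ (ρ * (δ + η) * (M / μ)) / μ := by
      rw [hHinvdiff]
      exact (hHinvBound x₁ _).trans (div_le_div_of_nonneg_right hinner hμ.le)
    calc ‖A₂ ((Hinv x₁ - Hinv x₂) v₁)‖ ≤ L * ‖(Hinv x₁ - Hinv x₂) v₁‖ := hApt x₂ y₂ _
      _ ≤ L * ((ρ * (δ + η) * (M / μ)) / μ) := mul_le_mul_of_nonneg_left hmid hL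
  have hb3 : ‖A₂ (Hinv x₂ (v₁ - v₂))‖ ≤ L * (L * (δ + η) / μ) := by
    have hmid : ‖Hinv x₂ (v₁ - v₂)‖ ≤ L * (δ + η) / μ :=
      (hHinvBound x₂ _).trans (div_le_div_of_nonneg_right hv hμ.le)
    calc ‖A₂ (Hinv x₂ (v₁ - v₂))‖ ≤ L * ‖Hinv x₂ (v₁ - v₂)‖ := hApt x₂ y₂ _
      _ ≤ L * (L * (δ + η) / μ) := mul_le_mul_of_nonneg_left hmid hL
  -- assemble
  have hbsum : ‖A₁ (Hinv x₁ v₁) - A₂ (Hinv x₂ v₂)‖ ≤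
      ρ * (δ + η) * (M / μ) + L * ((ρ * (δ + η) * (M / μ)) / μ) + L * (L * (δ + η) / μ) := by
    rw [hb_eq]
    calc ‖(A₁ - A₂) (Hinv x₁ v₁) + A₂ ((Hinv x₁ - Hinv x₂) v₁) + A₂ (Hinv x₂ (v₁ - v₂))‖
        ≤ ‖(A₁ - A₂) (Hinv x₁ v₁) + A₂ ((Hinv x₁ - Hinv x₂) v₁)‖ + ‖A₂ (Hinv x₂ (v₁ - v₂))‖ :=
          norm_add_le _ _
      _ ≤ ‖(A₁ - A₂) (Hinv x₁ v₁)‖ + ‖A₂ ((Hinv x₁ - Hinv x₂) v₁)‖ + ‖A₂ (Hinv x₂ (v₁ - v₂))‖ :=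
          add_le_add (norm_add_le _ _) le_rfl
      _ ≤ _ := add_le_add (add_le_add hb1 hb2) hb3
  have htot : ‖GF x₁ - GF x₂‖ ≤
      L * (δ + η) + (ρ * (δ + η) * (M / μ) + L * ((ρ * (δ + η) * (M / μ)) / μ) +
        L * (L * (δ + η) / μ)) := by
    rw [hGF x₁, hGF x₂]
    calc ‖gradx f x₁ y₁ - A₁ (Hinv x₁ v₁) - (gradx f x₂ y₂ - A₂ (Hinv x₂ v₂))‖
        = ‖(gradx f x₁ y₁ - gradx f x₂ y₂) - (A₁ (Hinv x₁ v₁) - A₂ (Hinv x₂ v₂))‖ := by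
          congr 1; abel
      _ ≤ ‖gradx f x₁ y₁ - gradx f x₂ y₂‖ + ‖A₁ (Hinv x₁ v₁) - A₂ (Hinv x₂ v₂)‖ :=
          norm_sub_le _ _
      _ ≤ _ := add_le_add ha hbsum
  set C := L + ρ * M / μ + ρ * L * M / μ ^ 2 + L ^ 2 / μ with hC
  have hC0 : 0 ≤ C := by rw [hC]; positivity
  have heqC : L * (δ + η) + (ρ * (δ + η) * (M / μ) + L * ((ρ * (δ + η) * (M / μ)) / μ) +
      L * (L * (δ + η) / μ)) = C * (δ + η) := by
    rw [hC]; field_simp; ring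
  rw [heqC] at htot
  have hfinal : C * (δ + η) ≤ (L / μ + 1) * C * δ := by
    have h1 : δ + η ≤ (L / μ + 1) * δ := by
      have : δ + η ≤ δ + L / μ * δ := by linarith
      calc δ + η ≤ δ + L / μ * δ := this
        _ = (L / μ + 1) * δ := by ring
    calc C * (δ + η) ≤ C * ((L / μ + 1) * δ) := mul_le_mul_of_nonneg_left h1 hC0
      _ = (L / μ + 1) * C * δ := by ring
  exact htot.trans hfinal
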